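/- arXiv:2109.05267 — 2 statements merged into one kernel-verified Lean document; each statement's English description precedes it below -/
import Mathlib

section
/- The function g(Z) = (exp(Z) + c)/Z is convex on Z > 0 whenever c ≥ -1. -/
open Real Set

/-- `Z ↦ (exp Z + c)/Z` is convex on `(0,∞)` whenever `c ≥ -1`. -/
theorem exp_add_const_div_convexOn (c : ℝ) (hc : c ≥ -1) :
    ConvexOn ℝ (Set.Ioi (0 : ℝ)) (fun Z => (Real.exp Z + c) / Z) := by
  have hint : interior (Set.Ioi (0:ℝ)) = Set.Ioi 0 := interior_Ioi
  refine convexOn_of_hasDerivWithinAt2_nonneg (convex_Ioi 0)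
    (f' := fun x => (Real.exp x * x - (Real.exp x + c) * 1) / x ^ 2)
    (f'' := fun x => ((Real.exp x * x) * x ^ 2 -
        (Real.exp x * x - (Real.exp x + c) * 1) * (2 * x)) / (x ^ 2) ^ 2)
    ?_ ?_ ?_ ?_
  · intro x hx
    have hx0 : x ≠ 0 := ne_of_gt hx
    exact ContinuousWithinAt.div
      ((Real.continuous_exp.continuousWithinAt).add continuousWithinAt_const)
      continuousWithinAt_id hx0
  · intro x hx
    rw [hint] at hx ⊢
    have hx0 : x ≠ 0 := ne_of_gt hx
    have : HasDerivAt (fun Z => (Real.exp Z + c) / Z)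
        ((Real.exp x * x - (Real.exp x + c) * 1) / x ^ 2) x :=
      HasDerivAt.div ((Real.hasDerivAt_exp x).add_const c) (hasDerivAt_id x) hx0
    exact this.hasDerivWithinAt
  · intro x hx
    rw [hint] at hx ⊢
    have hx0 : x ≠ 0 := ne_of_gt hx
    have hnum : HasDerivAt (fun Z => Real.exp Z * Z - (Real.exp Z + c) * 1)
        (Real.exp x * x) x := by
      have h1 : HasDerivAt (fun Z => Real.exp Z * Z) (Real.exp x * x + Real.exp x * 1) x :=
        (Real.hasDerivAt_exp x).mul (hasDerivAt_id x)
      have h2 : HasDerivAt (fun Z => (Real.exp Z + c) * 1) (Real.exp x * 1) x := by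
        simpa using ((Real.hasDerivAt_exp x).add_const c).mul_const (1:ℝ)
      have : HasDerivAt (fun Z => Real.exp Z * Z - (Real.exp Z + c) * 1)
          (Real.exp x * x + Real.exp x * 1 - Real.exp x * 1) x := h1.sub h2
      convert this using 1; ring
    have hden : HasDerivAt (fun Z : ℝ => Z ^ 2) (2 * x) x := by
      simpa [mul_comm] using hasDerivAt_pow 2 x
    have := hnum.div hden (pow_ne_zero 2 hx0)
    exact this.hasDerivWithinAt
  · intro x hx
    rw [hint] at hx
    have hx0 : (0:ℝ) < x := hx
    have hexp : 1 + x + x ^ 2 / 2 ≤ Real.exp x := Real.quadratic_le_exp_of_nonneg hx0.le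
    have hnum : 0 ≤ (Real.exp x * x) * x ^ 2 -
        (Real.exp x * x - (Real.exp x + c) * 1) * (2 * x) := by
      have hq : (0:ℝ) ≤ x ^ 2 - 2 * x + 2 := by nlinarith [sq_nonneg (x - 1)]
      have h1 := mul_le_mul_of_nonneg_right hexp hq
      nlinarith [h1, hx0, hc, mul_nonneg hx0.le (sq_nonneg (x ^ 2)),
        mul_pos hx0 hx0, mul_le_mul_of_nonneg_left h1 hx0.le]
    positivity
end

section
/- The function G(j, Z) = a·j + (V·b/Z)·(exp(Z) + c) is jointly convex in (j, Z) on R × (0,∞), for constants a ≥ 0, V > 0, b > 0, c ≥ -1. -/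
open Real Set

/-- The total energy cost `G(j, Z) = a j + (V b / Z)(exp Z + c)` is jointly convex in
`(j, Z)` on `ℝ × (0,∞)`, for constants `a ≥ 0`, `V > 0`, `b > 0`, `c ≥ -1`. -/
theorem energy_cost_jointly_convex
    (a V b c : ℝ) (ha : 0 ≤ a) (hV : 0 < V) (hb : 0 < b) (hc : c ≥ -1) :
    ConvexOn ℝ ((Set.univ : Set ℝ) ×ˢ Set.Ioi (0 : ℝ))
      (fun p : ℝ × ℝ => a * p.1 + (V * b / p.2) * (Real.exp p.2 + c)) := by
  have hVb : 0 < V * b := mul_pos hV hb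
  set g : ℝ → ℝ := fun x => V * b * (Real.exp x + c) / x with hgdef
  set g1 : ℝ → ℝ := fun x =>
    (V * b * Real.exp x * x - V * b * (Real.exp x + c) * 1) / x ^ 2 with hg1def
  have hd1 : ∀ x : ℝ, x ≠ 0 → HasDerivAt g (g1 x) x := by
    intro x hx
    exact (((Real.hasDerivAt_exp x).add_const c).const_mul (V * b)).div (hasDerivAt_id x) hx
  have hd2 : ∀ x : ℝ, x ≠ 0 → HasDerivAt g1
      (((V * b * Real.exp x * x + V * b * Real.exp x * 1 - V * b * Real.exp x * 1) * x ^ 2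
        - (V * b * Real.exp x * x - V * b * (Real.exp x + c) * 1) * (↑2 * x ^ (2 - 1))) /
        (x ^ 2) ^ 2) x := by
    intro x hx
    have hnum : HasDerivAt (fun y : ℝ => V * b * Real.exp y * y - V * b * (Real.exp y + c) * 1)
        (V * b * Real.exp x * x + V * b * Real.exp x * 1 - V * b * Real.exp x * 1) x := by
      have h1 : HasDerivAt (fun y : ℝ => V * b * Real.exp y * y)
          (V * b * Real.exp x * x + V * b * Real.exp x * 1) x := by
        have := ((Real.hasDerivAt_exp x).const_mul (V * b)).mul (hasDerivAt_id x)
        simpa [mul_comm, mul_assoc, add_comm, Pi.mul_def] using this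
      have h2 : HasDerivAt (fun y : ℝ => V * b * (Real.exp y + c) * 1)
          (V * b * Real.exp x * 1) x := by
        simpa using (((Real.hasDerivAt_exp x).add_const c).const_mul (V * b)).mul_const 1
      exact h1.sub h2
    have hden : HasDerivAt (fun y : ℝ => y ^ 2) (↑2 * x ^ (2 - 1)) x := hasDerivAt_pow 2 x
    exact hnum.div hden (pow_ne_zero 2 hx)
  have hderiv_eq : ∀ x ∈ Set.Ioi (0:ℝ), deriv g x = g1 x := fun x hx =>
    (hd1 x (ne_of_gt hx)).deriv
  have key : ConvexOn ℝ (Set.Ioi (0:ℝ)) g := by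
    apply convexOn_of_deriv2_nonneg (convex_Ioi 0)
    · intro x hx
      exact ((hd1 x (ne_of_gt hx)).differentiableAt).continuousAt.continuousWithinAt
    · intro x hx
      rw [interior_Ioi] at hx
      exact ((hd1 x (ne_of_gt hx)).differentiableAt).differentiableWithinAt
    · intro x hx
      rw [interior_Ioi] at hx
      have heq : deriv g =ᶠ[nhds x] g1 :=
        Filter.eventuallyEq_of_mem (isOpen_Ioi.mem_nhds hx) hderiv_eq
      exact ((hd2 x (ne_of_gt hx)).differentiableAt.congr_of_eventuallyEq heq).differentiableWithinAt
    · intro x hx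
      rw [interior_Ioi] at hx
      have hxpos : (0:ℝ) < x := hx
      have heq : deriv g =ᶠ[nhds x] g1 :=
        Filter.eventuallyEq_of_mem (isOpen_Ioi.mem_nhds hx) hderiv_eq
      have : deriv^[2] g x = deriv g1 x := by
        simp only [Function.iterate_succ, Function.iterate_zero, Function.comp_apply, id]
        exact heq.deriv_eq
      rw [this, (hd2 x (ne_of_gt hxpos)).deriv]
      apply div_nonneg _ (by positivity)
      have hexp : 1 + x + x ^ 2 / 2 ≤ Real.exp x := by
        have := Real.sum_le_exp_of_nonneg hxpos.le 3
        simp [Finset.sum_range_succ, Nat.factorial] at this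
        nlinarith [this]
      have h4 : 0 ≤ Real.exp x * (x ^ 2 - 2 * x + 2) + 2 * c := by
        nlinarith [mul_nonneg (sub_nonneg.2 hexp) (by nlinarith [sq_nonneg (x - 1)] :
          (0:ℝ) ≤ x ^ 2 - 2 * x + 2), sq_nonneg (x ^ 2)]
      have h5 : 0 ≤ V * b * x * (Real.exp x * (x ^ 2 - 2 * x + 2) + 2 * c) :=
        mul_nonneg (mul_pos hVb hxpos).le h4
      norm_num
      nlinarith [h5]
  have hsconv : Convex ℝ ((Set.univ : Set ℝ) ×ˢ Set.Ioi (0:ℝ)) :=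
    convex_univ.prod (convex_Ioi 0)
  have h1 : ConvexOn ℝ ((Set.univ : Set ℝ) ×ˢ Set.Ioi (0:ℝ)) (fun p : ℝ × ℝ => g p.2) := by
    refine ⟨hsconv, fun x hx y hy s t hs ht hst => ?_⟩
    exact key.2 hx.2 hy.2 hs ht hst
  have h2 : ConvexOn ℝ ((Set.univ : Set ℝ) ×ˢ Set.Ioi (0:ℝ)) (fun p : ℝ × ℝ => a * p.1) := by
    refine ⟨hsconv, fun x hx y hy s t hs ht hst => le_of_eq ?_⟩
    simp [Prod.smul_fst]
    ring
  have hsum := h2.add h1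
  have hfe : (fun p : ℝ × ℝ => a * p.1 + (V * b / p.2) * (Real.exp p.2 + c))
      = fun p : ℝ × ℝ => a * p.1 + g p.2 := by
    funext p
    simp only [hgdef]
    ring
  rw [hfe]
  exact hsum
end
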